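/- Every equivalence class of down-sets structure under the action of the wreath product S_k ≀ S_t on subsets of the grid [k]×[t] contains a unique down-set of the product order k̄ × t̄; consequently the quotient B_{kt}/(S_k ≀ S_t) is order-isomorphic to the lattice L(k,t) of integer sequences 0 ≤ a_1 ≤ ... ≤ a_t ≤ k under componentwise order, which in turn is isomorphic to the quotient of the t-th power of a (k+1)-chain by S_t permuting coordinates. -/

import Mathlib

namespace PaperSCD

variable {β : Type*}

/-- `x` is covered by `y` with respect to the order relation `le`. -/
def Covers (le : β → β → Prop) (x y : β) : Prop :=
  le x y ∧ x ≠ y ∧ ∀ z, le x z → le z y → z = x ∨ z = y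

/-- `r` is a rank function for the order `le`: covers raise rank by one and
minimal elements have rank zero. -/
def IsRankFn (le : β → β → Prop) (r : β → ℕ) : Prop :=
  (∀ x y, Covers le x y → r y = r x + 1) ∧ ∀ x, (∀ y, le y x → y = x) → r x = 0

/-- `C` is a chain with respect to `le`. -/
def IsChn (le : β → β → Prop) (C : Set β) : Prop :=
  ∀ x ∈ C, ∀ y ∈ C, le x y ∨ le y x

/-- `x` is covered by `y` inside the subposet `S`. -/
def CoversIn (le : β → β → Prop) (S : Set β) (x y : β) : Prop :=
  x ∈ S ∧ y ∈ S ∧ le x y ∧ x ≠ y ∧ ∀ z ∈ S, le x z → le z y → z = x ∨ z = y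

/-- The chain `C` is saturated in the ambient order: consecutive elements of `C`
are covers in the ambient order. -/
def SatChn (le : β → β → Prop) (C : Set β) : Prop :=
  ∀ x ∈ C, ∀ y ∈ C, CoversIn le C x y → Covers le x y

/-- `C` is a nonempty saturated chain which is symmetric for rank function `r`
in a poset of rank `R`. -/
def IsSymmSatChain (le : β → β → Prop) (r : β → ℕ) (R : ℕ) (C : Set β) : Prop :=
  C.Nonempty ∧ IsChn le C ∧ SatChn le C ∧
    ∃ a ∈ C, ∃ b ∈ C, (∀ x ∈ C, le a x ∧ le x b) ∧ r a + r b = R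

/-- `𝒟` is a symmetric chain decomposition. -/
def IsSCD (le : β → β → Prop) (r : β → ℕ) (R : ℕ) (𝒟 : Set (Set β)) : Prop :=
  (∀ C ∈ 𝒟, IsSymmSatChain le r R C) ∧ ∀ x : β, ∃! C, C ∈ 𝒟 ∧ x ∈ C

/-- The order `le` is a symmetric chain order. -/
def IsSCO (le : β → β → Prop) : Prop :=
  ∃ (r : β → ℕ) (R : ℕ) (𝒟 : Set (Set β)),
    IsRankFn le r ∧ (∀ x, r x ≤ R) ∧ (Nonempty β → ∃ x, r x = R) ∧ IsSCD le r R 𝒟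

/-- The quotient order on `Quot rel`: `[x] ≤ [y]` iff some representatives are comparable. -/
def qle (rel : β → β → Prop) (le : β → β → Prop) (a b : Quot rel) : Prop :=
  ∃ x y : β, Quot.mk rel x = a ∧ Quot.mk rel y = b ∧ le x y

/-- The permutation `(i, r) ↦ (ρ_r i, τ r)` of `[k] × [t]`. -/
def wrPerm {k t : ℕ} (ρ : Fin t → Equiv.Perm (Fin k)) (τ : Equiv.Perm (Fin t)) :
    Equiv.Perm (Fin k × Fin t) where
  toFun p := (ρ p.2 p.1, τ p.2)
  invFun p := ((ρ (τ.symm p.2)).symm p.1, τ.symm p.2)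
  left_inv := by rintro ⟨i, r⟩; simp
  right_inv := by rintro ⟨i, r⟩; simp

/-- The wreath product `K ≀ T` as a set of permutations of `[k] × [t]`. -/
def wreathSet {k t : ℕ} (K : Subgroup (Equiv.Perm (Fin k))) (T : Subgroup (Equiv.Perm (Fin t))) :
    Set (Equiv.Perm (Fin k × Fin t)) :=
  { φ | ∃ ρ τ, (∀ r, ρ r ∈ K) ∧ τ ∈ T ∧ φ = wrPerm ρ τ }

/-- A subgroup of a permutation group is generated by powers of pairwise disjoint cycles. -/
def GenByPowersOfDisjointCycles {α : Type*} (T : Subgroup (Equiv.Perm α)) : Prop :=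
  ∃ (m : ℕ) (σ : Fin m → Equiv.Perm α) (e : Fin m → ℕ),
    (∀ i, (σ i).IsCycle) ∧ (∀ i j, i ≠ j → (σ i).Disjoint (σ j)) ∧
    T = Subgroup.closure (Set.range fun i => σ i ^ e i)

/-- The `r`-th column of a subset of `[k] × [t]`, identified with a subset of `[k]`. -/
def col {k t : ℕ} (X : Finset (Fin k × Fin t)) (r : Fin t) : Finset (Fin k) :=
  (X.filter fun p => p.2 = r).image Prod.fst

/-- Orbit relation of `K ≤ S_k` on subsets of `[k]`. -/
def relK {k : ℕ} (K : Subgroup (Equiv.Perm (Fin k))) :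
    Finset (Fin k) → Finset (Fin k) → Prop :=
  fun A B => ∃ g ∈ K, A.image ⇑g = B

/-- Orbit relation of the wreath product `K ≀ T` on subsets of `[k] × [t]`. -/
def relW {k t : ℕ} (K : Subgroup (Equiv.Perm (Fin k))) (T : Subgroup (Equiv.Perm (Fin t))) :
    Finset (Fin k × Fin t) → Finset (Fin k × Fin t) → Prop :=
  fun X Y => ∃ φ ∈ wreathSet K T, X.image ⇑φ = Y

/-- The rank (cardinality of a representative) on `B_k/K`. -/
def qrank {k : ℕ} (K : Subgroup (Equiv.Perm (Fin k))) : Quot (relK K) → ℕ :=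
  Quot.lift Finset.card (by
    rintro A B ⟨g, -, rfl⟩
    exact (Finset.card_image_of_injective A g.injective).symm)

/-- The coordinate-permuting action `σ • f = f ∘ σ⁻¹`. -/
def actF {n : ℕ} {γ : Type*} (σ : Equiv.Perm (Fin n)) (f : Fin n → γ) : Fin n → γ :=
  fun i => f (σ.symm i)

/-- `τ` stabilizes `j̄` under the coordinate-permuting action. -/
def ActStab {t s : ℕ} (τ : Equiv.Perm (Fin t)) (j : Fin t → Fin s) : Prop :=
  ∀ r, j (τ.symm r) = j r

end PaperSCD
open PaperSCD

/-- `L(k,t)`: weakly increasing sequences `0 ≤ a_1 ≤ ⋯ ≤ a_t ≤ k`. -/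
def Lkt (k t : ℕ) := {a : Fin t → Fin (k + 1) // Monotone a}

/-- Orbit relation of `S_t` permuting the coordinates of the `t`-th power of a
`(k+1)`-element chain. -/
def relChainPow (k t : ℕ) : (Fin t → Fin (k + 1)) → (Fin t → Fin (k + 1)) → Prop :=
  fun f g => ∃ τ : Equiv.Perm (Fin t), actF τ f = g

namespace SCD19
open Finset
variable {k t : ℕ}

lemma mem_col {X : Finset (Fin k × Fin t)} {i : Fin k} {r : Fin t} :
    i ∈ col X r ↔ (i, r) ∈ X := by
  simp only [col, Finset.mem_image, Finset.mem_filter]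
  constructor
  · rintro ⟨⟨a, b⟩, ⟨hab, rfl⟩, rfl⟩; exact hab
  · intro h; exact ⟨(i, r), ⟨h, rfl⟩, rfl⟩

def initSeg (k m : ℕ) : Finset (Fin k) := Finset.univ.filter fun i => i.val < m

lemma mem_initSeg {m : ℕ} {i : Fin k} : i ∈ initSeg k m ↔ i.val < m := by
  simp [initSeg]

lemma card_initSeg {m : ℕ} (h : m ≤ k) : (initSeg k m).card = m := by
  have : initSeg k m = (Finset.univ : Finset (Fin m)).map (Fin.castLEEmb h) := by
    ext i
    simp only [mem_initSeg, Finset.mem_map, Finset.mem_univ, true_and, Fin.castLEEmb,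
      Function.Embedding.coeFn_mk, Fin.ext_iff, Fin.coe_castLE]
    constructor
    · intro hi; exact ⟨⟨i, hi⟩, rfl⟩
    · rintro ⟨j, hj⟩; rw [← hj]; exact j.2
  rw [this, Finset.card_map, Finset.card_univ, Fintype.card_fin]

def stdSet (k t : ℕ) (d : Fin t → ℕ) : Finset (Fin k × Fin t) :=
  Finset.univ.filter fun p => p.1.val < d p.2

lemma mem_stdSet {d : Fin t → ℕ} {p : Fin k × Fin t} : p ∈ stdSet k t d ↔ p.1.val < d p.2 := by
  simp [stdSet]

lemma col_stdSet (d : Fin t → ℕ) (r : Fin t) : col (stdSet k t d) r = initSeg k (d r) := by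
  ext i; rw [mem_col, mem_stdSet, mem_initSeg]

lemma card_col_le (X : Finset (Fin k × Fin t)) (r : Fin t) : (col X r).card ≤ k := by
  simpa using Finset.card_le_univ (col X r)

lemma exists_perm_image {A B : Finset (Fin k)} (h : A.card = B.card) :
    ∃ g : Equiv.Perm (Fin k), A.image ⇑g = B := by
  classical
  let e : {x // x ∈ A} ≃ {x // x ∈ B} := Finset.equivOfCardEq h
  refine ⟨e.extendSubtype, ?_⟩
  apply Finset.eq_of_subset_of_card_le
  · intro b hb
    rcases Finset.mem_image.mp hb with ⟨a, ha, rfl⟩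
    exact e.extendSubtype_mem a ha
  · rw [Finset.card_image_of_injective _ (Equiv.injective _), h]

lemma wrPerm_apply (ρ : Fin t → Equiv.Perm (Fin k)) (τ : Equiv.Perm (Fin t))
    (p : Fin k × Fin t) : wrPerm ρ τ p = (ρ p.2 p.1, τ p.2) := rfl

lemma mem_wreath_top (ρ : Fin t → Equiv.Perm (Fin k)) (τ : Equiv.Perm (Fin t)) :
    wrPerm ρ τ ∈ wreathSet (⊤ : Subgroup (Equiv.Perm (Fin k))) (⊤ : Subgroup (Equiv.Perm (Fin t))) :=
  ⟨ρ, τ, fun _ => trivial, trivial, rfl⟩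

lemma relW_refl (X : Finset (Fin k × Fin t)) :
    relW (⊤ : Subgroup (Equiv.Perm (Fin k))) (⊤ : Subgroup (Equiv.Perm (Fin t))) X X := by
  refine ⟨wrPerm (fun _ => 1) 1, mem_wreath_top _ _, ?_⟩
  have : ⇑(wrPerm (fun _ => (1 : Equiv.Perm (Fin k))) (1 : Equiv.Perm (Fin t))) = id := by
    funext p; rfl
  rw [this, Finset.image_id]

lemma relW_symm {X Y : Finset (Fin k × Fin t)}
    (h : relW (⊤ : Subgroup (Equiv.Perm (Fin k))) (⊤ : Subgroup (Equiv.Perm (Fin t))) X Y) :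
    relW (⊤ : Subgroup (Equiv.Perm (Fin k))) (⊤ : Subgroup (Equiv.Perm (Fin t))) Y X := by
  obtain ⟨φ, ⟨ρ, τ, -, -, rfl⟩, rfl⟩ := h
  refine ⟨wrPerm (fun r => (ρ (τ.symm r))⁻¹) τ.symm, mem_wreath_top _ _, ?_⟩
  rw [Finset.image_image]
  have : ⇑(wrPerm (fun r => (ρ (τ.symm r))⁻¹) τ.symm) ∘ ⇑(wrPerm ρ τ) = id := by
    funext p
    show ((ρ (τ.symm (τ p.2)))⁻¹ (ρ p.2 p.1), τ.symm (τ p.2)) = p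
    simp
  rw [this, Finset.image_id]

lemma relW_trans {X Y Z : Finset (Fin k × Fin t)}
    (h1 : relW (⊤ : Subgroup (Equiv.Perm (Fin k))) (⊤ : Subgroup (Equiv.Perm (Fin t))) X Y)
    (h2 : relW (⊤ : Subgroup (Equiv.Perm (Fin k))) (⊤ : Subgroup (Equiv.Perm (Fin t))) Y Z) :
    relW (⊤ : Subgroup (Equiv.Perm (Fin k))) (⊤ : Subgroup (Equiv.Perm (Fin t))) X Z := by
  obtain ⟨φ, ⟨ρ, τ, -, -, rfl⟩, rfl⟩ := h1
  obtain ⟨ψ, ⟨ρ', τ', -, -, rfl⟩, rfl⟩ := h2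
  refine ⟨wrPerm (fun r => ρ' (τ r) * ρ r) (τ.trans τ'), mem_wreath_top _ _, ?_⟩
  rw [Finset.image_image]
  congr 1

lemma relW_equiv : Equivalence
    (relW (⊤ : Subgroup (Equiv.Perm (Fin k))) (⊤ : Subgroup (Equiv.Perm (Fin t)))) :=
  ⟨relW_refl, relW_symm, relW_trans⟩

lemma col_image_wrPerm (X : Finset (Fin k × Fin t)) (ρ : Fin t → Equiv.Perm (Fin k))
    (τ : Equiv.Perm (Fin t)) (s : Fin t) :
    col (X.image ⇑(wrPerm ρ τ)) s = (col X (τ.symm s)).image ⇑(ρ (τ.symm s)) := by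
  ext i
  rw [mem_col]
  constructor
  · intro h
    rcases Finset.mem_image.mp h with ⟨⟨a, b⟩, hab, heq⟩
    rw [wrPerm_apply] at heq
    obtain ⟨h1, h2⟩ := Prod.mk.injEq .. ▸ heq
    have hb : b = τ.symm s := by rw [← h2]; simp
    subst hb
    exact Finset.mem_image.mpr ⟨a, mem_col.mpr hab, h1⟩
  · intro h
    rcases Finset.mem_image.mp h with ⟨a, ha, rfl⟩
    refine Finset.mem_image.mpr ⟨(a, τ.symm s), mem_col.mp ha, ?_⟩
    rw [wrPerm_apply]
    simp

lemma relW_stdSet (X : Finset (Fin k × Fin t)) (σ : Equiv.Perm (Fin t)) :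
    relW (⊤ : Subgroup (Equiv.Perm (Fin k))) (⊤ : Subgroup (Equiv.Perm (Fin t))) X
      (stdSet k t (fun s => (col X (σ s)).card)) := by
  classical
  have hcard : ∀ r, (col X r).card = (initSeg k (col X r).card).card :=
    fun r => (card_initSeg (card_col_le X r)).symm
  choose g hg using fun r => exists_perm_image (hcard r)
  refine ⟨wrPerm g σ⁻¹, mem_wreath_top _ _, ?_⟩
  ext ⟨i, s⟩
  have hsymm : (σ⁻¹ : Equiv.Perm (Fin t)).symm = σ := rfl
  rw [← mem_col, col_image_wrPerm, hsymm, hg, mem_stdSet, mem_initSeg]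

lemma relW_colSizes {X Y : Finset (Fin k × Fin t)}
    (h : relW (⊤ : Subgroup (Equiv.Perm (Fin k))) (⊤ : Subgroup (Equiv.Perm (Fin t))) X Y) :
    ∃ τ : Equiv.Perm (Fin t), ∀ s, (col Y s).card = (col X (τ.symm s)).card := by
  obtain ⟨φ, ⟨ρ, τ, -, -, rfl⟩, rfl⟩ := h
  refine ⟨τ, fun s => ?_⟩
  rw [col_image_wrPerm, Finset.card_image_of_injective _ (Equiv.injective _)]

lemma isLowerSet_stdSet {d : Fin t → ℕ} (hd : Antitone d) :
    IsLowerSet ((stdSet k t d : Finset (Fin k × Fin t)) : Set (Fin k × Fin t)) := by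
  rintro ⟨i, r⟩ ⟨i', r'⟩ ⟨h1, h2⟩ hmem
  simp only [Finset.mem_coe, mem_stdSet] at hmem ⊢
  calc (i' : ℕ) ≤ i := h1
    _ < d r := hmem
    _ ≤ d r' := hd h2

lemma lowerSet_finset_eq_initSeg {A : Finset (Fin k)}
    (hA : ∀ i ∈ A, ∀ i' ≤ i, i' ∈ A) : A = initSeg k A.card := by
  ext i
  rw [mem_initSeg]
  constructor
  · intro hi
    have hsub : Finset.Iic i ⊆ A := fun j hj => hA i hi j (Finset.mem_Iic.mp hj)
    have := Finset.card_le_card hsub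
    rw [Fin.card_Iic] at this
    omega
  · intro hi
    by_contra hmem
    have hsub : A ⊆ Finset.Iio i := by
      intro j hj
      rw [Finset.mem_Iio]
      by_contra hle
      exact hmem (hA j hj i (not_lt.mp hle))
    have := Finset.card_le_card hsub
    rw [Fin.card_Iio] at this
    omega

lemma lowerSet_eq_stdSet {Y : Finset (Fin k × Fin t)} (hY : IsLowerSet (Y : Set (Fin k × Fin t))) :
    Y = stdSet k t (fun r => (col Y r).card) := by
  have hcol : ∀ r : Fin t, col Y r = initSeg k (col Y r).card := by
    intro r
    apply lowerSet_finset_eq_initSeg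
    intro i hi i' hle
    exact mem_col.mpr (hY (Prod.mk_le_mk.mpr ⟨hle, le_refl r⟩) (mem_col.mp hi))
  ext ⟨i, r⟩
  rw [← mem_col, mem_stdSet]
  conv_lhs => rw [hcol r]
  rw [mem_initSeg]

lemma lowerSet_antitone {Y : Finset (Fin k × Fin t)} (hY : IsLowerSet (Y : Set (Fin k × Fin t))) :
    Antitone (fun r => (col Y r).card) := by
  intro r' r hle
  apply Finset.card_le_card
  intro j hj
  exact mem_col.mpr (hY (Prod.mk_le_mk.mpr ⟨le_refl j, hle⟩) (mem_col.mp hj))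

lemma monotone_rearrange_eq {α : Type*} [LinearOrder α] {f g : Fin t → α}
    (hf : Monotone f) (hg : Monotone g) (σ : Equiv.Perm (Fin t)) (h : g = f ∘ ⇑σ) : g = f := by
  have h1 : f ∘ ⇑σ = f ∘ ⇑(Tuple.sort f) :=
    Tuple.comp_sort_eq_comp_iff_monotone.mpr (h ▸ hg)
  have h2 : f ∘ ⇑(1 : Equiv.Perm (Fin t)) = f ∘ ⇑(Tuple.sort f) :=
    Tuple.comp_sort_eq_comp_iff_monotone.mpr (by simpa using hf)
  calc g = f ∘ ⇑σ := h
    _ = f ∘ ⇑(Tuple.sort f) := h1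
    _ = f ∘ ⇑(1 : Equiv.Perm (Fin t)) := h2.symm
    _ = f := by funext i; rfl

lemma antitone_comp_rev {α : Type*} [LinearOrder α] {f : Fin t → α} (hf : Antitone f) :
    Monotone (f ∘ Fin.rev) := fun i j hij => hf (Fin.rev_le_rev.mpr hij)

lemma antitone_rearrange_eq {α : Type*} [LinearOrder α] {f g : Fin t → α}
    (hf : Antitone f) (hg : Antitone g) (σ : Equiv.Perm (Fin t)) (h : g = f ∘ ⇑σ) : g = f := by
  have key : g ∘ Fin.rev = f ∘ Fin.rev := by
    apply monotone_rearrange_eq (antitone_comp_rev hf) (antitone_comp_rev hg)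
      (Fin.revPerm.trans (σ.trans Fin.revPerm))
    funext i
    simp only [Function.comp_apply, Equiv.trans_apply, Fin.revPerm_apply, Fin.rev_rev]
    rw [h]; rfl
  funext i
  have := congrFun key (Fin.rev i)
  simpa [Fin.rev_rev] using this

lemma card_filter_comp_perm {p : Fin t → Prop} [DecidablePred p] (α : Equiv.Perm (Fin t)) :
    (Finset.univ.filter fun i => p (α i)).card = (Finset.univ.filter p).card := by
  apply Finset.card_bij (fun i _ => α i)
  · intro a ha
    simp only [Finset.mem_filter, Finset.mem_univ, true_and] at ha ⊢
    exact ha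
  · intro a _ b _ hab
    exact α.injective hab
  · intro b hb
    refine ⟨α.symm b, ?_, by simp⟩
    simp only [Finset.mem_filter, Finset.mem_univ, true_and] at hb ⊢
    simpa using hb

lemma dominance {α' : Type*} [LinearOrder α'] {a b : Fin t → α'}
    (ha : Monotone a) (hb : Monotone b) (σ π : Equiv.Perm (Fin t))
    (h : ∀ i, a (σ i) ≤ b (π i)) : ∀ r, a r ≤ b r := by
  classical
  intro r
  by_contra hc
  push_neg at hc
  set v := a r with hv
  have h1 : Finset.Iic r ⊆ Finset.univ.filter fun i => b i < v := by
    intro i hi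
    simp only [Finset.mem_Iic] at hi
    simp only [Finset.mem_filter, Finset.mem_univ, true_and]
    exact lt_of_le_of_lt (hb hi) hc
  have h2 : (Finset.univ.filter fun i => a i < v) ⊆ Finset.Iio r := by
    intro i hi
    simp only [Finset.mem_filter, Finset.mem_univ, true_and] at hi
    simp only [Finset.mem_Iio]
    by_contra hle
    exact absurd (ha (not_lt.mp hle)) (not_le.mpr hi)
  have h3 : (Finset.univ.filter fun i => b (π i) < v) ⊆
      Finset.univ.filter fun i => a (σ i) < v := by
    intro i hi
    simp only [Finset.mem_filter, Finset.mem_univ, true_and] at hi ⊢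
    exact lt_of_le_of_lt (h i) hi
  have c1 : r.val + 1 ≤ (Finset.univ.filter fun i => b i < v).card := by
    calc r.val + 1 = (Finset.Iic r).card := (Fin.card_Iic r).symm
      _ ≤ _ := Finset.card_le_card h1
  have c2 : (Finset.univ.filter fun i => a i < v).card ≤ r.val := by
    calc (Finset.univ.filter fun i => a i < v).card
        ≤ (Finset.Iio r).card := Finset.card_le_card h2
      _ = r.val := Fin.card_Iio r
  have c3 := Finset.card_le_card h3
  rw [card_filter_comp_perm (p := fun i => b i < v) π,
    card_filter_comp_perm (p := fun i => a i < v) σ] at c3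
  omega

def cFin (k t : ℕ) (X : Finset (Fin k × Fin t)) : Fin t → Fin (k + 1) :=
  fun r => ⟨(col X r).card, Nat.lt_succ_of_le (card_col_le X r)⟩

def sortedC (k t : ℕ) (X : Finset (Fin k × Fin t)) : Fin t → Fin (k + 1) :=
  cFin k t X ∘ ⇑(Tuple.sort (cFin k t X))

lemma sortedC_monotone (X : Finset (Fin k × Fin t)) : Monotone (sortedC k t X) :=
  Tuple.monotone_sort _

lemma sortedC_eq_of_relW {X Y : Finset (Fin k × Fin t)}
    (h : relW (⊤ : Subgroup (Equiv.Perm (Fin k))) (⊤ : Subgroup (Equiv.Perm (Fin t))) X Y) :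
    sortedC k t Y = sortedC k t X := by
  obtain ⟨τ, hτ⟩ := relW_colSizes h
  have hg : cFin k t Y = cFin k t X ∘ ⇑τ.symm := funext fun s => Fin.ext (hτ s)
  apply monotone_rearrange_eq (sortedC_monotone X) (sortedC_monotone Y)
    ((Tuple.sort (cFin k t Y)).trans (τ.symm.trans (Tuple.sort (cFin k t X))⁻¹))
  funext i
  simp only [sortedC, Function.comp_apply, Equiv.trans_apply, hg]
  rw [Equiv.Perm.inv_def, Equiv.apply_symm_apply]

lemma relW_sorted_stdSet (X : Finset (Fin k × Fin t)) :
    relW (⊤ : Subgroup (Equiv.Perm (Fin k))) (⊤ : Subgroup (Equiv.Perm (Fin t))) X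
      (stdSet k t (fun s => (sortedC k t X s : ℕ))) :=
  relW_stdSet X (Tuple.sort (cFin k t X))

lemma stdSet_subset {d d' : Fin t → ℕ} (h : ∀ r, d r ≤ d' r) :
    stdSet k t d ⊆ stdSet k t d' := by
  intro p hp
  rw [mem_stdSet] at hp ⊢
  exact lt_of_lt_of_le hp (h p.2)

lemma cFin_subset {X Y : Finset (Fin k × Fin t)} (h : X ⊆ Y) (r : Fin t) :
    cFin k t X r ≤ cFin k t Y r := by
  apply Finset.card_le_card
  intro j hj
  exact mem_col.mpr (h (mem_col.mp hj))

lemma actF_eq (σ : Equiv.Perm (Fin t)) (f : Fin t → Fin (k + 1)) :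
    actF σ f = f ∘ ⇑σ.symm := rfl

lemma relChainPow_equiv : Equivalence (relChainPow k t) := by
  constructor
  · intro f; exact ⟨1, rfl⟩
  · rintro f g ⟨τ, rfl⟩
    refine ⟨τ⁻¹, ?_⟩
    funext i
    show f (τ.symm (τ i)) = f i
    rw [Equiv.symm_apply_apply]
  · rintro f g h ⟨τ, rfl⟩ ⟨σ, rfl⟩
    refine ⟨σ * τ, ?_⟩
    funext i
    show f ((σ * τ)⁻¹ i) = f (τ⁻¹ (σ⁻¹ i))
    rw [mul_inv_rev, Equiv.Perm.mul_apply]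

lemma relChainPow_of_mk_eq {f g : Fin t → Fin (k + 1)}
    (h : Quot.mk (relChainPow k t) f = Quot.mk (relChainPow k t) g) : relChainPow k t f g :=
  (relChainPow_equiv.eqvGen_iff).mp (Quot.eq.mp h)

end SCD19

/-- Every orbit of `S_k ≀ S_t` on subsets of the grid `[k] × [t]` contains
a unique down-set of the product order; consequently `B_{kt}/(S_k ≀ S_t)` is
order-isomorphic to `L(k,t)`, which in turn is isomorphic to the quotient of the `t`-th
power of a `(k+1)`-element chain by `S_t` permuting coordinates. -/
theorem stmt_19 (k t : ℕ) :
    (∀ X : Finset (Fin k × Fin t), ∃! Y : Finset (Fin k × Fin t),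
      relW (⊤ : Subgroup (Equiv.Perm (Fin k))) (⊤ : Subgroup (Equiv.Perm (Fin t))) X Y ∧
        IsLowerSet (Y : Set (Fin k × Fin t))) ∧
    (∃ F : Quot (relW (⊤ : Subgroup (Equiv.Perm (Fin k)))
          (⊤ : Subgroup (Equiv.Perm (Fin t)))) → Lkt k t,
      Function.Bijective F ∧
      ∀ a b, qle (relW ⊤ ⊤) (· ⊆ ·) a b ↔ ∀ r, (F a).1 r ≤ (F b).1 r) ∧
    (∃ G : Lkt k t → Quot (relChainPow k t),
      Function.Bijective G ∧
      ∀ a b : Lkt k t, (∀ r, a.1 r ≤ b.1 r) ↔ qle (relChainPow k t) (· ≤ ·) (G a) (G b)) := by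
  classical
  refine ⟨?_, ?_, ?_⟩
  · -- Part 1: unique lower set in each orbit
    intro X
    set c : Fin t → ℕ := fun r => (col X r).card with hc
    set σ : Equiv.Perm (Fin t) := Fin.revPerm.trans (Tuple.sort c) with hσ
    have hanti : Antitone fun s => (col X (σ s)).card := by
      intro i j hij
      exact Tuple.monotone_sort c (Fin.rev_le_rev.mpr hij)
    refine ⟨SCD19.stdSet k t (fun s => (col X (σ s)).card),
      ⟨SCD19.relW_stdSet X σ, SCD19.isLowerSet_stdSet hanti⟩, ?_⟩
    rintro Y' ⟨hrel', hlow'⟩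
    set Y := SCD19.stdSet k t (fun s => (col X (σ s)).card) with hY
    have hrelYY' : relW (⊤ : Subgroup (Equiv.Perm (Fin k)))
        (⊤ : Subgroup (Equiv.Perm (Fin t))) Y Y' :=
      SCD19.relW_trans (SCD19.relW_symm (SCD19.relW_stdSet X σ)) hrel'
    obtain ⟨τ', hτ'⟩ := SCD19.relW_colSizes hrelYY'
    have hY'anti := SCD19.lowerSet_antitone hlow'
    have hYanti := SCD19.lowerSet_antitone (Y := Y) (SCD19.isLowerSet_stdSet hanti)
    have heq : (fun r => (col Y' r).card) = fun r => (col Y r).card := by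
      apply SCD19.antitone_rearrange_eq hYanti hY'anti τ'.symm
      funext s; exact hτ' s
    calc Y' = SCD19.stdSet k t (fun r => (col Y' r).card) := SCD19.lowerSet_eq_stdSet hlow'
      _ = SCD19.stdSet k t (fun r => (col Y r).card) := by rw [heq]
      _ = Y := (SCD19.lowerSet_eq_stdSet (SCD19.isLowerSet_stdSet hanti)).symm
  · -- Part 2: order isomorphism with L(k,t)
    refine ⟨Quot.lift (fun X => (⟨SCD19.sortedC k t X, SCD19.sortedC_monotone X⟩ : Lkt k t))
      (fun X Y hXY => Subtype.ext (SCD19.sortedC_eq_of_relW hXY).symm), ⟨?_, ?_⟩, ?_⟩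
    · -- injective
      intro a b
      induction a using Quot.ind with | _ X => ?_
      induction b using Quot.ind with | _ Y => ?_
      intro h
      have hs : SCD19.sortedC k t X = SCD19.sortedC k t Y := congrArg Subtype.val h
      apply Quot.sound
      have h1 := SCD19.relW_sorted_stdSet X
      have h2 := SCD19.relW_sorted_stdSet Y
      rw [hs] at h1
      exact SCD19.relW_trans h1 (SCD19.relW_symm h2)
    · -- surjective
      intro a
      refine ⟨Quot.mk _ (SCD19.stdSet k t fun r => (a.1 r : ℕ)), ?_⟩
      have hcf : SCD19.cFin k t (SCD19.stdSet k t fun r => (a.1 r : ℕ)) = a.1 := by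
        funext r
        apply Fin.ext
        show (col (SCD19.stdSet k t fun r => (a.1 r : ℕ)) r).card = (a.1 r : ℕ)
        rw [SCD19.col_stdSet, SCD19.card_initSeg (Nat.lt_succ_iff.mp (a.1 r).2)]
      apply Subtype.ext
      show SCD19.sortedC k t _ = a.1
      have hmono : Monotone (SCD19.cFin k t (SCD19.stdSet k t fun r => (a.1 r : ℕ))) := by
        rw [hcf]; exact a.2
      have := SCD19.monotone_rearrange_eq hmono
        (SCD19.sortedC_monotone (SCD19.stdSet k t fun r => (a.1 r : ℕ)))
        (Tuple.sort (SCD19.cFin k t (SCD19.stdSet k t fun r => (a.1 r : ℕ)))) rfl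
      rw [this, hcf]
    · -- order
      intro a b
      induction a using Quot.ind with | _ X => ?_
      induction b using Quot.ind with | _ Y => ?_
      constructor
      · rintro ⟨X', Y', hX', hY', hsub⟩
        rw [← hX', ← hY']
        intro r
        show SCD19.sortedC k t X' r ≤ SCD19.sortedC k t Y' r
        refine SCD19.dominance (SCD19.sortedC_monotone X') (SCD19.sortedC_monotone Y')
          (Tuple.sort (SCD19.cFin k t X'))⁻¹ (Tuple.sort (SCD19.cFin k t Y'))⁻¹ ?_ r
        intro i
        show SCD19.cFin k t X' (Tuple.sort (SCD19.cFin k t X')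
            ((Tuple.sort (SCD19.cFin k t X'))⁻¹ i)) ≤ SCD19.cFin k t Y'
            (Tuple.sort (SCD19.cFin k t Y') ((Tuple.sort (SCD19.cFin k t Y'))⁻¹ i))
        rw [Equiv.Perm.inv_def, Equiv.apply_symm_apply, Equiv.Perm.inv_def, Equiv.apply_symm_apply]
        exact SCD19.cFin_subset hsub i
      · intro h
        refine ⟨SCD19.stdSet k t (fun s => (SCD19.sortedC k t X s : ℕ)),
          SCD19.stdSet k t (fun s => (SCD19.sortedC k t Y s : ℕ)),
          Quot.sound (SCD19.relW_symm (SCD19.relW_sorted_stdSet X)),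
          Quot.sound (SCD19.relW_symm (SCD19.relW_sorted_stdSet Y)),
          SCD19.stdSet_subset fun s => ?_⟩
        exact h s
  · -- Part 3: isomorphism with chain power quotient
    refine ⟨fun a => Quot.mk _ a.1, ⟨?_, ?_⟩, ?_⟩
    · -- injective
      intro a b h
      apply Subtype.ext
      obtain ⟨τ, hτ⟩ := SCD19.relChainPow_of_mk_eq h
      exact (SCD19.monotone_rearrange_eq a.2 b.2 τ.symm hτ.symm).symm
    · -- surjective
      intro q
      induction q using Quot.ind with | _ f => ?_
      refine ⟨⟨f ∘ ⇑(Tuple.sort f), Tuple.monotone_sort f⟩, ?_⟩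
      apply Quot.sound
      refine ⟨Tuple.sort f, ?_⟩
      funext i
      show f (Tuple.sort f ((Tuple.sort f).symm i)) = f i
      rw [Equiv.apply_symm_apply]
    · -- order
      intro a b
      constructor
      · intro h
        exact ⟨a.1, b.1, rfl, rfl, fun i => h i⟩
      · rintro ⟨x, y, hx, hy, hxy⟩
        obtain ⟨τ, hτ⟩ := SCD19.relChainPow_of_mk_eq hx
        obtain ⟨π, hπ⟩ := SCD19.relChainPow_of_mk_eq hy
        refine SCD19.dominance a.2 b.2 τ π (fun i => ?_)
        have h1 : a.1 (τ i) = x i := by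
          rw [← hτ]
          show x (τ.symm (τ i)) = x i
          rw [Equiv.symm_apply_apply]
        have h2 : b.1 (π i) = y i := by
          rw [← hπ]
          show y (π.symm (π i)) = y i
          rw [Equiv.symm_apply_apply]
        rw [h1, h2]
        exact hxy i
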